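/- Suppose Φ_1, …, Φ_k and S_1, …, S_k satisfy the (r = 2) subspace conditions, let n be an integer with 2n ≤ k, and assume S_{2j−1} ∩ S_{2j} = {0} for each j in {1,…,n}. Let Ω_1, …, Ω_m be linearly independent linear endomorphisms of V such that Ω_i(S_j) = S_j for all i in {1,…,m} and all j in {1,…,2n}. For i ∈ {1,…,m} and ε = (ε_1,…,ε_n) ∈ {0,1}^n, let Υ^i_ε be the composition applying Ω_i first and then, over j = 1,…,n in increasing order, the maps (Φ_{2j−1} followed by Φ_{2j}) for those j with ε_j = 1 (the paper's product Ω_i·∏_{j=1}^n (Φ_{2j−1}Φ_{2j})^{ε_j}). Then the m·2^n endomorphisms {Υ^i_ε : i ∈ {1,…,m}, ε ∈ {0,1}^n} are linearly independent over F. -/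

import Mathlib

section Aux

variable {F : Type*} [Field F] {V : Type*} [AddCommGroup V] [Module F V]

lemma stmt16_listProd_mem {l : List (Module.End F V)} {T : Submodule F V}
    (h : ∀ f ∈ l, ∀ x ∈ T, f x ∈ T) : ∀ x ∈ T, l.prod x ∈ T := by
  induction l with
  | nil => intro x hx; simpa using hx
  | cons a l ih =>
    intro x hx
    rw [List.prod_cons]
    have h2 := ih (fun f hf => h f (List.mem_cons_of_mem _ hf)) x hx
    simpa [Module.End.mul_apply] using h a List.mem_cons_self _ h2

/-- the selected-pair products -/
noncomputable def stmt16P (Φ' : ℕ → Module.End F V) (n : ℕ) (ε : Fin n → Bool) :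
    Module.End F V :=
  (List.ofFn fun j : Fin n =>
    if ε j then Φ' (2 * j.val + 1) * Φ' (2 * j.val) else 1).reverse.prod

lemma stmt16P_succ (Φ' : ℕ → Module.End F V) (n : ℕ) (ε : Fin (n + 1) → Bool) :
    stmt16P Φ' (n + 1) ε =
      (if ε (Fin.last n) then Φ' (2 * n + 1) * Φ' (2 * n) else 1) *
        stmt16P Φ' n (fun j => ε j.castSucc) := by
  unfold stmt16P
  rw [List.ofFn_succ', List.concat_eq_append, List.reverse_append]
  simp [Fin.coe_castSucc]

/-- extend `Φ` to all naturals by the identity -/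
noncomputable def stmt16Phi (k : ℕ) (Φ : Fin k → V ≃ₗ[F] V) (a : ℕ) : Module.End F V :=
  if h : a < k then (Φ ⟨a, h⟩ : V →ₗ[F] V) else 1

lemma stmt16Phi_lt (k : ℕ) (Φ : Fin k → V ≃ₗ[F] V) (a : ℕ) (h : a < k) :
    stmt16Phi k Φ a = (Φ ⟨a, h⟩ : V →ₗ[F] V) := dif_pos h

lemma stmt16_key [FiniteDimensional F V] (ℓ : ℕ) (hℓeven : Even ℓ)
    (hdim : Module.finrank F V = ℓ)
    (k : ℕ) (Φ : Fin k → V ≃ₗ[F] V) (S : Fin k → Submodule F V)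
    (hSdim : ∀ i, Module.finrank F (S i) = ℓ / 2)
    (h1 : ∀ i j : Fin k, i ≠ j → (S i).map (Φ j : V →ₗ[F] V) = S i)
    (h2 : ∀ i : Fin k, (S i).map (Φ i : V →ₗ[F] V) ⊓ S i = ⊥) :
    ∀ (n : ℕ) (hn : 2 * n ≤ k),
      (∀ (j : ℕ) (hj : j < n),
          S ⟨2 * j, by omega⟩ ⊓ S ⟨2 * j + 1, by omega⟩ = ⊥) →
      ∀ A : (Fin n → Bool) → Module.End F V,
        (∀ (ε : Fin n → Bool) (j : Fin k), j.val < 2 * n → ∀ x ∈ S j, A ε x ∈ S j) →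
        (∑ ε : Fin n → Bool, stmt16P (stmt16Phi k Φ) n ε * A ε = 0) →
        ∀ ε, A ε = 0 := by
  intro n
  induction n with
  | zero =>
    intro hn hdisj A hA hsum ε
    have h0 : ∑ δ : Fin 0 → Bool, stmt16P (stmt16Phi k Φ) 0 δ * A δ = A ε := by
      rw [Fintype.sum_unique]
      simp only [stmt16P, List.ofFn_zero, List.reverse_nil, List.prod_nil, one_mul]
      exact congrArg A (Subsingleton.elim _ _)
    rw [hsum] at h0
    exact h0.symm
  | succ n ih =>
    intro hn hdisj A hA hsum
    have h2n : 2 * n < k := by omega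
    have h2n1 : 2 * n + 1 < k := by omega
    set ia : Fin k := ⟨2 * n, h2n⟩ with hia
    set ib : Fin k := ⟨2 * n + 1, h2n1⟩ with hib
    have hab : ia ≠ ib := by simp [hia, hib, Fin.ext_iff]
    set T := S ia with hT
    set U := S ib with hU
    set φa : Module.End F V := (Φ ia : V →ₗ[F] V) with hφa
    set φb : Module.End F V := (Φ ib : V →ₗ[F] V) with hφb
    set Φ' := stmt16Phi k Φ with hΦ'
    set B : Bool → Module.End F V :=
      fun b => ∑ ε' : Fin n → Bool, stmt16P Φ' n ε' * A (Fin.snoc ε' b) with hB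
    have hsum2 : φb * φa * B true + B false = 0 := by
      have h0 : ∑ p : Bool × (Fin n → Bool),
          stmt16P Φ' (n + 1) (Fin.snoc p.2 p.1) * A (Fin.snoc p.2 p.1) = 0 := by
        have hc := Equiv.sum_comp (Fin.snocEquiv (fun _ : Fin (n + 1) => Bool))
          (fun ε => stmt16P Φ' (n + 1) ε * A ε)
        rw [hsum] at hc
        simpa [Fin.snocEquiv] using hc
      have hterm : ∀ p : Bool × (Fin n → Bool),
          stmt16P Φ' (n + 1) (Fin.snoc p.2 p.1) * A (Fin.snoc p.2 p.1) =
            (if p.1 then φb * φa else 1) *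
              (stmt16P Φ' n p.2 * A (Fin.snoc p.2 p.1)) := by
        intro p
        rw [stmt16P_succ]
        have hlast : (Fin.snoc p.2 p.1 : Fin (n + 1) → Bool) (Fin.last n) = p.1 := by simp
        have hcast : (fun j : Fin n =>
            (Fin.snoc p.2 p.1 : Fin (n + 1) → Bool) j.castSucc) = p.2 := by
          funext j; simp
        rw [hlast, hcast, mul_assoc]
        congr 2
        rw [hΦ', stmt16Phi_lt k Φ _ h2n1, stmt16Phi_lt k Φ _ h2n]
      rw [Finset.sum_congr rfl (fun p _ => hterm p), Fintype.sum_prod_type,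
        Fintype.sum_bool] at h0
      simp only [if_true, if_false, one_mul, ← Finset.mul_sum] at h0
      exact h0
    -- products over the first n pairs preserve S i for i ≥ 2n
    have hPmem : ∀ (i : Fin k), 2 * n ≤ i.val → ∀ ε' : Fin n → Bool,
        ∀ x ∈ S i, stmt16P Φ' n ε' x ∈ S i := by
      intro i hi ε'
      apply stmt16_listProd_mem
      intro f hf x hx
      rw [List.mem_reverse, List.mem_ofFn] at hf
      obtain ⟨j, rfl⟩ := hf
      split
      · have hjlt : (j : ℕ) < n := j.isLt
        have hj1 : 2 * j.val < k := by omega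
        have hj2 : 2 * j.val + 1 < k := by omega
        rw [hΦ', stmt16Phi_lt k Φ _ hj2, stmt16Phi_lt k Φ _ hj1,
          Module.End.mul_apply]
        have hne1 : i ≠ (⟨2 * j.val, hj1⟩ : Fin k) := by
          intro hcontra
          have h6 : (i : ℕ) = 2 * j.val := congrArg Fin.val hcontra
          omega
        have hne2 : i ≠ (⟨2 * j.val + 1, hj2⟩ : Fin k) := by
          intro hcontra
          have h6 : (i : ℕ) = 2 * j.val + 1 := congrArg Fin.val hcontra
          omega
        have m1 : (Φ ⟨2 * j.val, hj1⟩ : V →ₗ[F] V) x ∈ S i :=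
          (h1 i _ hne1) ▸ Submodule.mem_map_of_mem hx
        exact (h1 i _ hne2) ▸ Submodule.mem_map_of_mem m1
      · simpa using hx
    -- B maps T into T and U into U
    have hBT : ∀ b, ∀ x ∈ T, B b x ∈ T := by
      intro b x hx
      rw [hB]
      simp only [LinearMap.coe_sum, Finset.sum_apply]
      refine Submodule.sum_mem _ fun ε' _ => ?_
      rw [Module.End.mul_apply]
      exact hPmem ia le_rfl ε' _ (hA _ ia (by show 2 * n < 2 * (n + 1); omega) x hx)
    have hBU : ∀ b, ∀ x ∈ U, B b x ∈ U := by
      intro b x hx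
      rw [hB]
      simp only [LinearMap.coe_sum, Finset.sum_apply]
      refine Submodule.sum_mem _ fun ε' _ => ?_
      rw [Module.End.mul_apply]
      exact hPmem ib (by show 2 * n ≤ 2 * n + 1; omega) ε' _
        (hA _ ib (by show 2 * n + 1 < 2 * (n + 1); omega) x hx)
    -- pointwise consequence of hsum2
    have happ : ∀ x : V, φb (φa (B true x)) + B false x = 0 := by
      intro x
      have hc := congrArg (fun f : Module.End F V => f x) hsum2
      simpa [Module.End.mul_apply] using hc
    -- vanishing on T
    have hvT : ∀ x ∈ T, B true x = 0 ∧ B false x = 0 := by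
      intro x hx
      have hyT : B true x ∈ T := hBT true x hx
      have hmemT : φb (φa (B true x)) ∈ T := by
        have h3 : φb (φa (B true x)) = -(B false x) :=
          eq_neg_of_add_eq_zero_left (happ x)
        rw [h3]
        exact neg_mem (hBT false x hx)
      -- deduce φa (B true x) ∈ T
      have hmap : φa (B true x) ∈ T := by
        have : φb (φa (B true x)) ∈ T.map φb := by
          rw [hT, hφb, h1 ia ib hab]
          exact hmemT
        obtain ⟨z, hz, hz2⟩ := this
        have : z = φa (B true x) := (Φ ib).injective hz2
        rwa [← this]
      have hbot : φa (B true x) ∈ T.map φa ⊓ T :=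
        ⟨Submodule.mem_map_of_mem hyT, hmap⟩
      rw [hT, hφa, h2 ia] at hbot
      have hz : φa (B true x) = 0 := hbot
      have h4 : B true x = 0 :=
        (Φ ia).injective (a₂ := 0) (by rw [map_zero]; exact hz)
      refine ⟨h4, ?_⟩
      have := happ x
      rw [h4] at this
      simpa using this
    -- vanishing on U
    have hvU : ∀ x ∈ U, B true x = 0 ∧ B false x = 0 := by
      intro x hx
      have hyU : B true x ∈ U := hBU true x hx
      have hmemU : φb (φa (B true x)) ∈ U := by
        have h3 : φb (φa (B true x)) = -(B false x) :=
          eq_neg_of_add_eq_zero_left (happ x)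
        rw [h3]
        exact neg_mem (hBU false x hx)
      have hmap : φa (B true x) ∈ U := by
        have : φa (B true x) ∈ U.map φa := Submodule.mem_map_of_mem hyU
        rwa [hU, hφa, h1 ib ia (Ne.symm hab)] at this
      have hbot : φb (φa (B true x)) ∈ U.map φb ⊓ U :=
        ⟨Submodule.mem_map_of_mem hmap, hmemU⟩
      rw [hU, hφb, h2 ib] at hbot
      have hz : φb (φa (B true x)) = 0 := hbot
      have hz2 : φa (B true x) = 0 :=
        (Φ ib).injective (a₂ := 0) (by rw [map_zero]; exact hz)
      have h4 : B true x = 0 :=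
        (Φ ia).injective (a₂ := 0) (by rw [map_zero]; exact hz2)
      refine ⟨h4, ?_⟩
      have := happ x
      rw [h4] at this
      simpa using this
    -- T ⊔ U = ⊤
    have hTU : T ⊔ U = ⊤ := by
      apply Submodule.eq_top_of_finrank_eq
      have hr := Submodule.finrank_sup_add_finrank_inf_eq T U
      have hd : T ⊓ U = ⊥ := by
        rw [hT, hU]
        exact hdisj n (by omega)
      rw [hd, finrank_bot] at hr
      have hT2 : Module.finrank F T = ℓ / 2 := hSdim ia
      have hU2 : Module.finrank F U = ℓ / 2 := hSdim ib
      have hev : ℓ % 2 = 0 := Nat.even_iff.mp hℓeven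
      rw [hdim]
      omega
    -- B b = 0
    have hBzero : ∀ b, B b = 0 := by
      intro b
      ext x
      have hx : x ∈ T ⊔ U := by rw [hTU]; trivial
      obtain ⟨t, ht, u, hu, rfl⟩ := Submodule.mem_sup.mp hx
      have h5 : B b t = 0 := by cases b <;> [exact (hvT t ht).2; exact (hvT t ht).1]
      have h6 : B b u = 0 := by cases b <;> [exact (hvU u hu).2; exact (hvU u hu).1]
      simp [map_add, h5, h6]
    -- apply induction hypothesis
    have hAzero : ∀ (b : Bool) (ε' : Fin n → Bool), A (Fin.snoc ε' b) = 0 := by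
      intro b
      refine ih (by omega) (fun j hj => hdisj j (by omega))
        (fun ε' => A (Fin.snoc ε' b))
        (fun ε' j hj x hx => hA _ j (by omega) x hx) ?_
      have hb0 := hBzero b
      rw [hB] at hb0
      exact hb0
    intro ε
    have : ε = Fin.snoc (Fin.init ε) (ε (Fin.last n)) := (Fin.snoc_init_self ε).symm
    rw [this]
    exact hAzero _ _

end Aux


/-- Under the (r = 2) subspace conditions, with `2n ≤ k`,
`S_{2j−1} ∩ S_{2j} = {0}` for `j = 1,…,n`, and linearly independent endomorphisms
`Ω₁, …, Ω_m` satisfying `Ω_i(S_j) = S_j` for all `j ∈ {1,…,2n}`, the `m·2ⁿ`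
compositions `Υ^i_ε = Ω_i · ∏_{j=1}^n (Φ_{2j−1}Φ_{2j})^{ε_j}` (`Ω_i` applied first,
then the selected pairs in increasing `j`) are linearly independent. -/
theorem stmt16 (F : Type*) [Field F] (V : Type*) [AddCommGroup V] [Module F V]
    [FiniteDimensional F V] (ℓ : ℕ) (hℓeven : Even ℓ) (hℓpos : 0 < ℓ)
    (hdim : Module.finrank F V = ℓ)
    (k : ℕ) (Φ : Fin k → V ≃ₗ[F] V) (S : Fin k → Submodule F V)
    (hSdim : ∀ i, Module.finrank F (S i) = ℓ / 2)
    (h1 : ∀ i j : Fin k, i ≠ j → (S i).map (Φ j : V →ₗ[F] V) = S i)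
    (h2 : ∀ i : Fin k, (S i).map (Φ i : V →ₗ[F] V) ⊓ S i = ⊥)
    (n : ℕ) (hn : 2 * n ≤ k)
    (hdisj : ∀ j : Fin n,
      S ⟨2 * j.val, by omega⟩ ⊓ S ⟨2 * j.val + 1, by omega⟩ = ⊥)
    (m : ℕ) (Ω : Fin m → Module.End F V)
    (hΩind : LinearIndependent F Ω)
    (hΩS : ∀ (i : Fin m) (j : Fin k), j.val < 2 * n → (S j).map (Ω i) = S j)
    (Υ : Fin m → (Fin n → Bool) → Module.End F V)
    (hΥ : ∀ (i : Fin m) (ε : Fin n → Bool), Υ i ε =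
      (List.ofFn (fun j : Fin n =>
        if ε j then
          ((Φ ⟨2 * j.val + 1, by omega⟩ : V →ₗ[F] V)) ∘ₗ
            ((Φ ⟨2 * j.val, by omega⟩ : V →ₗ[F] V))
        else (1 : Module.End F V))).reverse.prod * Ω i) :
    LinearIndependent F (fun x : Fin m × (Fin n → Bool) => Υ x.1 x.2) := by
  rw [Fintype.linearIndependent_iff]
  intro g hg
  have hΥP : ∀ (i : Fin m) (ε : Fin n → Bool),
      Υ i ε = stmt16P (stmt16Phi k Φ) n ε * Ω i := by
    intro i ε
    rw [hΥ i ε]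
    congr 2
    apply congrArg List.reverse
    apply congrArg List.ofFn
    funext j
    have hjlt : (j : ℕ) < n := j.isLt
    have hj1 : 2 * j.val < k := by omega
    have hj2 : 2 * j.val + 1 < k := by omega
    split
    · rw [stmt16Phi_lt k Φ _ hj2, stmt16Phi_lt k Φ _ hj1]
      rfl
    · rfl
  have hsum : ∑ ε : Fin n → Bool,
      stmt16P (stmt16Phi k Φ) n ε * (∑ i, g (i, ε) • Ω i) = 0 := by
    rw [← hg, Fintype.sum_prod_type_right]
    refine Finset.sum_congr rfl fun ε _ => ?_
    rw [Finset.mul_sum]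
    refine Finset.sum_congr rfl fun i _ => ?_
    rw [hΥP i ε, mul_smul_comm]
  have hApres : ∀ (ε : Fin n → Bool) (j : Fin k), j.val < 2 * n →
      ∀ x ∈ S j, (∑ i, g (i, ε) • Ω i) x ∈ S j := by
    intro ε j hj x hx
    simp only [LinearMap.coe_sum, Finset.sum_apply, LinearMap.smul_apply]
    refine Submodule.sum_mem _ fun i _ => Submodule.smul_mem _ _ ?_
    exact (hΩS i j hj) ▸ Submodule.mem_map_of_mem hx
  have hAzero : ∀ ε : Fin n → Bool, (∑ i, g (i, ε) • Ω i) = 0 :=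
    stmt16_key ℓ hℓeven hdim k Φ S hSdim h1 h2 n hn
      (fun j hj => hdisj ⟨j, hj⟩) (fun ε => ∑ i, g (i, ε) • Ω i) hApres hsum
  intro x
  have := Fintype.linearIndependent_iff.mp hΩind (fun i => g (i, x.2))
    (hAzero x.2) x.1
  simpa using this
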